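/- arXiv:2011.02695 — 7 statements merged into one kernel-verified Lean document; each statement's English description precedes it below -/
import Mathlib

section
/- Let u ∈ V with G(u) < ∞, let τ > 0, and for each k = 1,…,N let w_k ∈ V_k be a minimizer over V_k of the map w ↦ E(u + R_k^* w). Set u⁺ = u + τ·Σ_{k=1}^N R_k^* w_k. Then u⁺ is a minimizer over V of the functional w ↦ F(u) + ⟨F'(u), w − u⟩ + M_τ(w, u). (Generalized additive Schwarz lemma.) -/
open RealInnerProductSpace

private lemma erealCoeSum {n : ℕ} (f : Fin n → ℝ) :
    ((∑ k, f k : ℝ) : EReal) = ∑ k, ((f k : ℝ) : EReal) := by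
  induction n with
  | zero => simp
  | succ n ih => rw [Fin.sum_univ_succ, Fin.sum_univ_succ, EReal.coe_add, ih]

/-- Generalized additive Schwarz lemma: the additive Schwarz update
`u⁺ = u + τ ∑ₖ Rₖ* wₖ`, where each `wₖ` minimizes `w ↦ E(u + Rₖ* w)`, is a minimizer
of the surrogate functional `w ↦ F(u) + ⟨F'(u), w − u⟩ + M_τ(w, u)`. -/
theorem generalized_additive_schwarz_lemma
    {V : Type*} [NormedAddCommGroup V] [NormedSpace ℝ V]
    {N : ℕ} (Vk : Fin N → Type*) [∀ k, NormedAddCommGroup (Vk k)]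
    [∀ k, NormedSpace ℝ (Vk k)]
    (R : ∀ k, Vk k →L[ℝ] V)
    -- space decomposition V = ∑ₖ Rₖ* Vk
    (hdecomp : ∀ v : V, ∃ w : ∀ k, Vk k, v = ∑ k, R k (w k))
    -- F : V → ℝ Fréchet differentiable and convex, with derivative F'
    (F : V → ℝ) (F' : V → V →L[ℝ] ℝ)
    (hF : ∀ v, HasFDerivAt F (F' v) v)
    (hFconv : ConvexOn ℝ Set.univ F)
    -- G : V → ℝ ∪ {+∞} proper convex
    (G : V → EReal)
    (hGnotbot : ∀ v, G v ≠ ⊥)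
    (hGproper : ∃ v, G v ≠ ⊤)
    (hGconv : ∀ x y : V, ∀ t : ℝ, 0 ≤ t → t ≤ 1 →
      G (t • x + (1 - t) • y) ≤ (t : EReal) * G x + ((1 - t : ℝ) : EReal) * G y)
    -- E = F + G
    (E : V → EReal) (hE : ∀ v, E v = (F v : EReal) + G v)
    -- Bregman distance of F
    (DF : V → V → ℝ) (hDF : ∀ x y, DF x y = F x - F y - F' y (x - y))
    -- step size
    (τ : ℝ) (hτ : 0 < τ)
    -- the functional M_τ
    (Mτ : V → V → EReal)
    (hMτ : ∀ x v, Mτ x v =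
      (τ : EReal) * sInf { s : EReal | ∃ w : ∀ k, Vk k,
          x - v = τ • ∑ k, R k (w k) ∧
          s = ∑ k, (((DF (v + R k (w k)) v : ℝ) : EReal) + G (v + R k (w k))) }
        + ((1 - τ * N : ℝ) : EReal) * G v)
    -- the current iterate, with G(u) < ∞
    (u : V) (hu : G u ≠ ⊤)
    -- the local minimizers
    (w : ∀ k, Vk k)
    (hw : ∀ k, ∀ z : Vk k, E (u + R k (w k)) ≤ E (u + R k z))
    -- the additive Schwarz update
    (uplus : V) (huplus : uplus = u + τ • ∑ k, R k (w k)) :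
    ∀ z : V,
      ((F u : ℝ) : EReal) + ((F' u (uplus - u) : ℝ) : EReal) + Mτ uplus u ≤
      ((F u : ℝ) : EReal) + ((F' u (z - u) : ℝ) : EReal) + Mτ z u := by
  intro z
  have hτ' : τ ≠ 0 := ne_of_gt hτ
  -- G u is finite
  set gu : ℝ := (G u).toReal with hgu_def
  have hgu : G u = (gu : EReal) := (EReal.coe_toReal hu (hGnotbot u)).symm
  -- each E (u + R k (w k)) is at most E u
  have hak_le : ∀ k, E (u + R k (w k)) ≤ E u := by
    intro k
    have := hw k 0
    simpa using this
  -- G (u + R k (w k)) is finite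
  have hGak : ∀ k, G (u + R k (w k)) ≠ ⊤ := by
    intro k hk
    have h1 := hak_le k
    rw [hE u, hE (u + R k (w k)), hk, hgu, ← EReal.coe_add, EReal.coe_add_top] at h1
    exact (EReal.coe_ne_top _) (top_le_iff.mp h1)
  set g : Fin N → ℝ := fun k => (G (u + R k (w k))).toReal with hgdef
  have hg : ∀ k, G (u + R k (w k)) = ((g k : ℝ) : EReal) := fun k =>
    (EReal.coe_toReal (hGak k) (hGnotbot _)).symm
  set e : Fin N → ℝ := fun k => F (u + R k (w k)) + g k with hedef
  have he : ∀ k, E (u + R k (w k)) = ((e k : ℝ) : EReal) := fun k => by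
    rw [hE, hg k, EReal.coe_add]
  -- linearity
  have hlin : ∀ v : ∀ k, Vk k,
      F' u (τ • ∑ k, R k (v k)) = τ * ∑ k, F' u (R k (v k)) := by
    intro v
    rw [map_smul, map_sum]
    simp [smul_eq_mul]
  have hup : uplus - u = τ • ∑ k, R k (w k) := by rw [huplus]; exact add_sub_cancel_left _ _
  -- the set family
  set S : V → Set EReal := fun x => { s : EReal | ∃ w' : ∀ k, Vk k,
      x - u = τ • ∑ k, R k (w' k) ∧
      s = ∑ k, (((DF (u + R k (w' k)) u : ℝ) : EReal) + G (u + R k (w' k))) } with hSdef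
  -- the real lower bound function
  set r : V → ℝ := fun x => ∑ k, e k - N * F u - F' u (x - u) / τ with hrdef
  -- key lower bound: every element of S x is at least r x
  have key : ∀ x : V, ∀ s ∈ S x, ((r x : ℝ) : EReal) ≤ s := by
    rintro x s ⟨w', hx, rfl⟩
    have hterm : ∀ k, ((e k - F u - F' u (R k (w' k)) : ℝ) : EReal) ≤
        ((DF (u + R k (w' k)) u : ℝ) : EReal) + G (u + R k (w' k)) := by
      intro k
      have hmin : ((e k : ℝ) : EReal) ≤
          ((F (u + R k (w' k)) : ℝ) : EReal) + G (u + R k (w' k)) := by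
        rw [← he k, ← hE]; exact hw k (w' k)
      have hDFk : DF (u + R k (w' k)) u
          = F (u + R k (w' k)) - F u - F' u (R k (w' k)) := by
        rw [hDF]; congr 2; exact add_sub_cancel_left _ _
      calc ((e k - F u - F' u (R k (w' k)) : ℝ) : EReal)
          = ((e k : ℝ) : EReal) + ((- F u - F' u (R k (w' k)) : ℝ) : EReal) := by
            rw [← EReal.coe_add]; norm_cast; ring
        _ ≤ (((F (u + R k (w' k)) : ℝ) : EReal) + G (u + R k (w' k)))
              + ((- F u - F' u (R k (w' k)) : ℝ) : EReal) := by
            exact add_le_add_left hmin _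
        _ = ((DF (u + R k (w' k)) u : ℝ) : EReal) + G (u + R k (w' k)) := by
            rw [hDFk, show (F (u + R k (w' k)) - F u - F' u (R k (w' k)) : ℝ)
              = F (u + R k (w' k)) + (- F u - F' u (R k (w' k))) by ring, EReal.coe_add]
            abel
    have hsum := Finset.sum_le_sum (s := Finset.univ) (fun k _ => hterm k)
    refine le_trans (le_of_eq ?_) hsum
    rw [← erealCoeSum]
    norm_cast
    have hxlin : F' u (x - u) = τ * ∑ k, F' u (R k (w' k)) := by rw [hx, hlin]
    rw [hrdef]
    simp only
    rw [Finset.sum_sub_distrib, Finset.sum_sub_distrib, Finset.sum_const,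
      Finset.card_univ, Fintype.card_fin, nsmul_eq_mul, hxlin]
    field_simp
  -- r uplus belongs to S uplus
  have hmem : ((r uplus : ℝ) : EReal) ∈ S uplus := by
    refine ⟨w, hup, ?_⟩
    have hterm : ∀ k, ((DF (u + R k (w k)) u : ℝ) : EReal) + G (u + R k (w k))
        = ((DF (u + R k (w k)) u + g k : ℝ) : EReal) := fun k => by
      rw [hg k, EReal.coe_add]
    rw [Finset.sum_congr rfl (fun k _ => hterm k), ← erealCoeSum]
    norm_cast
    have hxlin : F' u (uplus - u) = τ * ∑ k, F' u (R k (w k)) := by rw [hup, hlin]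
    have hDFk : ∀ k, DF (u + R k (w k)) u
        = F (u + R k (w k)) - F u - F' u (R k (w k)) := by
      intro k; rw [hDF]; congr 2; exact add_sub_cancel_left _ _
    simp only [hrdef, hedef, hDFk, hxlin]
    rw [mul_div_cancel_left₀ _ hτ', Finset.sum_add_distrib, Finset.sum_add_distrib,
      Finset.sum_sub_distrib, Finset.sum_sub_distrib, Finset.sum_const,
      Finset.card_univ, Fintype.card_fin, nsmul_eq_mul]
    ring
  -- the infimum bounds
  have hinf_up : sInf (S uplus) = ((r uplus : ℝ) : EReal) :=
    le_antisymm (sInf_le hmem) (le_sInf (fun s hs => key uplus s hs))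
  have hinf_z : ((r z : ℝ) : EReal) ≤ sInf (S z) := le_sInf (fun s hs => key z s hs)
  have hτE : (0 : EReal) ≤ (τ : EReal) := by exact_mod_cast hτ.le
  -- rewrite the goal
  rw [hMτ uplus u, hMτ z u, hgu]
  have h1 : (τ : EReal) * sInf (S uplus) = ((τ * r uplus : ℝ) : EReal) := by
    rw [hinf_up, ← EReal.coe_mul]
  have h2 : ((τ * r z : ℝ) : EReal) ≤ (τ : EReal) * sInf (S z) := by
    rw [EReal.coe_mul]
    exact mul_le_mul_of_nonneg_left hinf_z hτE
  have hd : ((1 - τ * N : ℝ) : EReal) * ((gu : ℝ) : EReal)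
      = (((1 - τ * N) * gu : ℝ) : EReal) := (EReal.coe_mul _ _).symm
  calc ((F u : ℝ) : EReal) + ((F' u (uplus - u) : ℝ) : EReal) +
        ((τ : EReal) * sInf (S uplus) + ((1 - τ * N : ℝ) : EReal) * ((gu : ℝ) : EReal))
      = ((F u + F' u (uplus - u) + (τ * r uplus + (1 - τ * N) * gu) : ℝ) : EReal) := by
        rw [h1, hd, ← EReal.coe_add, ← EReal.coe_add, ← EReal.coe_add]
    _ = ((F u + F' u (z - u) + (τ * r z + (1 - τ * N) * gu) : ℝ) : EReal) := by
        norm_cast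
        rw [hrdef]
        simp only
        field_simp
        ring
    _ ≤ ((F u : ℝ) : EReal) + ((F' u (z - u) : ℝ) : EReal) +
        ((τ : EReal) * sInf (S z) + ((1 - τ * N : ℝ) : EReal) * ((gu : ℝ) : EReal)) := by
        rw [hd, EReal.coe_add, EReal.coe_add, EReal.coe_add]
        exact add_le_add_right (add_le_add_left h2 _) _
end

section
/- For every z ∈ V, ⟨Mz, z⟩ = min{ Σ_{k=1}^N ⟨A_k w_k, w_k⟩ : w_k ∈ V_k, z = Σ_{k=1}^N R_k^* w_k }, i.e., the quadratic form of the additive Schwarz preconditioner M equals the minimal sum of local energies over all decompositions of z. (Additive Schwarz lemma.) -/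
open RealInnerProductSpace

/-- Additive Schwarz lemma: for every `z ∈ V`, the quadratic form `⟨Mz, z⟩` of the
additive Schwarz preconditioner `M = (∑ₖ Rₖ* Aₖ⁻¹ Rₖ)⁻¹` equals the minimum of
`∑ₖ ⟨Aₖ wₖ, wₖ⟩` over all decompositions `z = ∑ₖ Rₖ* wₖ`. -/
theorem additive_schwarz_lemma
    {V : Type*} [NormedAddCommGroup V] [InnerProductSpace ℝ V] [FiniteDimensional ℝ V]
    {N : ℕ} (Vk : Fin N → Type*) [∀ k, NormedAddCommGroup (Vk k)]
    [∀ k, InnerProductSpace ℝ (Vk k)] [∀ k, FiniteDimensional ℝ (Vk k)]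
    -- A self-adjoint positive definite
    (A : V →ₗ[ℝ] V) (hAsym : A.IsSymmetric)
    (hApd : ∀ v : V, v ≠ 0 → 0 < ⟪A v, v⟫)
    -- the maps Rₖ* with surjective adjoints Rₖ
    (Rstar : ∀ k, Vk k →ₗ[ℝ] V)
    (hsurj : ∀ k, Function.Surjective (LinearMap.adjoint (Rstar k)))
    -- space decomposition V = ∑ₖ Rₖ* Vk
    (hdecomp : ∀ v : V, ∃ w : ∀ k, Vk k, v = ∑ k, Rstar k (w k))
    -- local stiffness operators Aₖ and their inverses
    (Ak : ∀ k, Vk k →ₗ[ℝ] Vk k)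
    (hAk : ∀ k, ∀ x y : Vk k, ⟪Ak k x, y⟫ = ⟪A (Rstar k x), Rstar k y⟫)
    (AkInv : ∀ k, Vk k →ₗ[ℝ] Vk k)
    (hAkInv₁ : ∀ k, AkInv k ∘ₗ Ak k = LinearMap.id)
    (hAkInv₂ : ∀ k, Ak k ∘ₗ AkInv k = LinearMap.id)
    -- the additive Schwarz preconditioner M = (∑ₖ Rₖ* Aₖ⁻¹ Rₖ)⁻¹
    (M : V →ₗ[ℝ] V)
    (hM₁ : M ∘ₗ (∑ k, Rstar k ∘ₗ AkInv k ∘ₗ LinearMap.adjoint (Rstar k)) = LinearMap.id)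
    (hM₂ : (∑ k, Rstar k ∘ₗ AkInv k ∘ₗ LinearMap.adjoint (Rstar k)) ∘ₗ M = LinearMap.id) :
    ∀ z : V,
      IsLeast { s : ℝ | ∃ w : ∀ k, Vk k,
          z = ∑ k, Rstar k (w k) ∧ s = ∑ k, ⟪Ak k (w k), w k⟫ } ⟪M z, z⟫ := by
  intro z
  set w0 : ∀ k, Vk k := fun k => AkInv k (LinearMap.adjoint (Rstar k) (M z)) with hw0
  have hAk0 : ∀ k, Ak k (w0 k) = LinearMap.adjoint (Rstar k) (M z) := fun k => by
    have := congrArg (fun f => f (LinearMap.adjoint (Rstar k) (M z))) (hAkInv₂ k)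
    simpa [w0] using this
  have hzdec : ∑ k, Rstar k (w0 k) = z := by
    have := congrArg (fun f => f z) hM₂
    simpa [LinearMap.sum_apply, LinearMap.comp_apply, w0] using this
  have hA0 : ∀ v : V, 0 ≤ ⟪A v, v⟫ := by
    intro v
    by_cases hv : v = 0
    · simp [hv]
    · exact (hApd v hv).le
  have hAknn : ∀ k (x : Vk k), 0 ≤ ⟪Ak k x, x⟫ := fun k x => by
    rw [hAk k]; exact hA0 _
  have hAksym : ∀ k (x y : Vk k), ⟪Ak k x, y⟫ = ⟪Ak k y, x⟫ := by
    intro k x y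
    rw [hAk, hAk]
    exact (hAsym _ _).trans (real_inner_comm _ _)
  have key : ∀ w : ∀ k, Vk k,
      ∑ k, ⟪Ak k (w0 k), w k⟫ = ⟪M z, ∑ k, Rstar k (w k)⟫ := by
    intro w
    rw [inner_sum]
    refine Finset.sum_congr rfl fun k _ => ?_
    rw [hAk0 k, LinearMap.adjoint_inner_left]
  have hMzz : ∑ k, ⟪Ak k (w0 k), w0 k⟫ = ⟪M z, z⟫ := by
    rw [key, hzdec]
  constructor
  · exact ⟨w0, hzdec.symm, hMzz.symm⟩
  · rintro s ⟨w, hz, hs⟩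
    have hT : ∑ k, ⟪Ak k (w0 k), w k⟫ = ⟪M z, z⟫ := by
      rw [key, ← hz]
    have expand : ∀ k, ⟪Ak k (w k - w0 k), w k - w0 k⟫
        = ⟪Ak k (w k), w k⟫ - 2 * ⟪Ak k (w0 k), w k⟫ + ⟪Ak k (w0 k), w0 k⟫ := by
      intro k
      simp only [map_sub, inner_sub_left, inner_sub_right]
      rw [hAksym k (w k) (w0 k)]
      ring
    have hsum : 0 ≤ ∑ k, ⟪Ak k (w k - w0 k), w k - w0 k⟫ :=
      Finset.sum_nonneg fun k _ => hAknn k _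
    rw [Finset.sum_congr rfl (fun k _ => expand k), Finset.sum_add_distrib,
      Finset.sum_sub_distrib, ← Finset.mul_sum, hT, hMzz, ← hs] at hsum
    linarith
end

section
/- If F(u) = ½⟨Au, u⟩ − ⟨f, u⟩ and G = 0, then for all u, v ∈ V the functional M_τ of the generalized additive Schwarz lemma satisfies M_τ(u, v) = (1/(2τ))⟨M(u − v), u − v⟩, where M = (Σ_{k=1}^N R_k^* A_k^{-1} R_k)^{-1} is the additive Schwarz preconditioner; that is, the generalized additive Schwarz surrogate reduces to the quadratic preconditioned surrogate in the linear case. -/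
open RealInnerProductSpace

/-- In the linear case `F(u) = ½⟨Au,u⟩ − ⟨f,u⟩`, `G = 0`, the functional `M_τ` of the
generalized additive Schwarz lemma satisfies `M_τ(u,v) = (1/(2τ))⟨M(u−v), u−v⟩`, where
`M = (∑ₖ Rₖ* Aₖ⁻¹ Rₖ)⁻¹` is the additive Schwarz preconditioner. -/
theorem Mtau_eq_quadratic_surrogate
    {V : Type*} [NormedAddCommGroup V] [InnerProductSpace ℝ V] [FiniteDimensional ℝ V]
    {N : ℕ} (Vk : Fin N → Type*) [∀ k, NormedAddCommGroup (Vk k)]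
    [∀ k, InnerProductSpace ℝ (Vk k)] [∀ k, FiniteDimensional ℝ (Vk k)]
    -- A self-adjoint positive definite, f ∈ V
    (A : V →ₗ[ℝ] V) (hAsym : A.IsSymmetric)
    (hApd : ∀ v : V, v ≠ 0 → 0 < ⟪A v, v⟫)
    (f : V)
    -- the maps Rₖ* with surjective adjoints Rₖ
    (Rstar : ∀ k, Vk k →ₗ[ℝ] V)
    (hsurj : ∀ k, Function.Surjective (LinearMap.adjoint (Rstar k)))
    -- space decomposition V = ∑ₖ Rₖ* Vk
    (hdecomp : ∀ v : V, ∃ w : ∀ k, Vk k, v = ∑ k, Rstar k (w k))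
    -- local stiffness operators Aₖ and their inverses
    (Ak : ∀ k, Vk k →ₗ[ℝ] Vk k)
    (hAk : ∀ k, ∀ x y : Vk k, ⟪Ak k x, y⟫ = ⟪A (Rstar k x), Rstar k y⟫)
    (AkInv : ∀ k, Vk k →ₗ[ℝ] Vk k)
    (hAkInv₁ : ∀ k, AkInv k ∘ₗ Ak k = LinearMap.id)
    (hAkInv₂ : ∀ k, Ak k ∘ₗ AkInv k = LinearMap.id)
    -- the quadratic energy and its Bregman distance D_F(x,y) = ½⟨A(x−y), x−y⟩
    (F : V → ℝ) (hF : ∀ v, F v = (1 / 2) * ⟪A v, v⟫ - ⟪f, v⟫)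
    (DF : V → V → ℝ) (hDF : ∀ x y, DF x y = (1 / 2) * ⟪A (x - y), x - y⟫)
    -- step size
    (τ : ℝ) (hτ : 0 < τ)
    -- the functional M_τ (with G = 0)
    (Mτ : V → V → ℝ)
    (hMτ : ∀ u v, Mτ u v =
      τ * sInf { s : ℝ | ∃ w : ∀ k, Vk k,
        u - v = τ • ∑ k, Rstar k (w k) ∧ s = ∑ k, DF (v + Rstar k (w k)) v })
    -- the additive Schwarz preconditioner M = (∑ₖ Rₖ* Aₖ⁻¹ Rₖ)⁻¹
    (M : V →ₗ[ℝ] V)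
    (hM₁ : M ∘ₗ (∑ k, Rstar k ∘ₗ AkInv k ∘ₗ LinearMap.adjoint (Rstar k)) = LinearMap.id)
    (hM₂ : (∑ k, Rstar k ∘ₗ AkInv k ∘ₗ LinearMap.adjoint (Rstar k)) ∘ₗ M = LinearMap.id) :
    ∀ u v : V, Mτ u v = (1 / (2 * τ)) * ⟪M (u - v), u - v⟫ := by
  intro u v
  have hτ0 : τ ≠ 0 := hτ.ne'
  set z : V := u - v with hz
  set y : V := τ⁻¹ • z with hy
  set a : ∀ k, Vk k := fun k => AkInv k (LinearMap.adjoint (Rstar k) (M y)) with ha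
  have hApos : ∀ x : V, 0 ≤ ⟪A x, x⟫ := by
    intro x
    rcases eq_or_ne x 0 with h | h
    · simp [h]
    · exact (hApd x h).le
  have haAk : ∀ k, Ak k (a k) = LinearMap.adjoint (Rstar k) (M y) := by
    intro k
    have := congrArg (fun L => L (LinearMap.adjoint (Rstar k) (M y))) (hAkInv₂ k)
    simpa [ha] using this
  have hsum_a : ∑ k, Rstar k (a k) = y := by
    have := congrArg (fun L => L y) hM₂
    simpa [ha, LinearMap.sum_apply, LinearMap.comp_apply] using this
  have hcross : ∀ k (w : Vk k), ⟪A (Rstar k (a k)), Rstar k w⟫ = ⟪M y, Rstar k w⟫ := by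
    intro k w
    rw [← hAk k (a k) w, haAk k, LinearMap.adjoint_inner_left]
  have hsum_cross : ∀ w : ∀ k, Vk k,
      ∑ k, ⟪A (Rstar k (a k)), Rstar k (w k)⟫ = ⟪M y, ∑ k, Rstar k (w k)⟫ := by
    intro w
    rw [inner_sum]
    exact Finset.sum_congr rfl fun k _ => hcross k (w k)
  have h_a_energy : ∑ k, ⟪A (Rstar k (a k)), Rstar k (a k)⟫ = ⟪M y, y⟫ := by
    rw [hsum_cross a, hsum_a]
  have hlow : ∀ w : ∀ k, Vk k, ∑ k, Rstar k (w k) = y →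
      ⟪M y, y⟫ ≤ ∑ k, ⟪A (Rstar k (w k)), Rstar k (w k)⟫ := by
    intro w hw
    have expand : ∀ k, ⟪A (Rstar k (w k - a k)), Rstar k (w k - a k)⟫
        = ⟪A (Rstar k (w k)), Rstar k (w k)⟫
          - 2 * ⟪A (Rstar k (a k)), Rstar k (w k)⟫
          + ⟪A (Rstar k (a k)), Rstar k (a k)⟫ := by
      intro k
      have h1 : ⟪A (Rstar k (w k)), Rstar k (a k)⟫
          = ⟪A (Rstar k (a k)), Rstar k (w k)⟫ := by
        rw [hAsym, real_inner_comm]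
      simp only [map_sub, inner_sub_left, inner_sub_right]
      linarith
    have hsum_expand : ∑ k, ⟪A (Rstar k (w k - a k)), Rstar k (w k - a k)⟫
        = ∑ k, ⟪A (Rstar k (w k)), Rstar k (w k)⟫ - ⟪M y, y⟫ := by
      rw [Finset.sum_congr rfl fun k _ => expand k]
      rw [Finset.sum_add_distrib, Finset.sum_sub_distrib, h_a_energy,
        ← Finset.mul_sum, hsum_cross w, hw]
      ring
    have hnn : 0 ≤ ∑ k, ⟪A (Rstar k (w k - a k)), Rstar k (w k - a k)⟫ :=
      Finset.sum_nonneg fun k _ => hApos _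
    linarith [hsum_expand ▸ hnn]
  -- characterize the set
  set S : Set ℝ := { s : ℝ | ∃ w : ∀ k, Vk k,
      u - v = τ • ∑ k, Rstar k (w k) ∧ s = ∑ k, DF (v + Rstar k (w k)) v } with hS
  have hDF' : ∀ (x : V), DF (v + x) v = (1 / 2) * ⟪A x, x⟫ := by
    intro x
    rw [hDF]
    simp
  have hleast : IsLeast S ((1 / 2) * ⟪M y, y⟫) := by
    constructor
    · refine ⟨a, ?_, ?_⟩
      · rw [hsum_a, hy, smul_inv_smul₀ hτ0]
      · rw [Finset.sum_congr rfl fun k _ => hDF' (Rstar k (a k)), ← Finset.mul_sum,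
          h_a_energy]
    · rintro s ⟨w, hw1, hw2⟩
      have hw1' : ∑ k, Rstar k (w k) = y := by
        rw [hy, hz, hw1, inv_smul_smul₀ hτ0]
      have := hlow w hw1'
      rw [hw2, Finset.sum_congr rfl fun k _ => hDF' (Rstar k (w k)), ← Finset.mul_sum]
      linarith
  have hinf : sInf S = (1 / 2) * ⟪M y, y⟫ := hleast.csInf_eq
  rw [hMτ, ← hS, hinf]
  have hMy : ⟪M y, y⟫ = τ⁻¹ * (τ⁻¹ * ⟪M z, z⟫) := by
    rw [hy, map_smul, real_inner_smul_left, real_inner_smul_right]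
  rw [hMy, hz]
  field_simp
end

section
/- For every real s ≥ 2 and every dimension d, there exists a constant c > 0 depending only on s such that for all a, b ∈ ℝ^d: (1/s)|a|^s − (1/s)|b|^s − ⟨|b|^{s−2}b, a − b⟩ ≥ c|a − b|^s, where |·| and ⟨·,·⟩ are the Euclidean norm and inner product and |b|^{s−2}b is understood as 0 when b = 0. (This is the pointwise inequality underlying the sharpness with exponent p = s of the s-Laplacian energy F(u) = (1/s)∫_Ω |∇u|^s dx − ∫_Ω fu dx for s > 2.) -/
set_option maxHeartbeats 1000000


open RealInnerProductSpace

/-- Tangent line inequality for `x ↦ x ^ p`, `p ≥ 1`, on `[0, ∞)`. -/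
lemma rpow_tangent_aux {x y p : ℝ} (hx : 0 ≤ x) (hy : 0 ≤ y) (hp : 1 ≤ p) :
    y ^ p + p * y ^ (p - 1) * (x - y) ≤ x ^ p := by
  rcases eq_or_lt_of_le hy with h0 | h0
  · subst h0
    rcases eq_or_lt_of_le hp with h1 | h1
    · subst h1
      simp [Real.rpow_one]
    · rw [Real.zero_rpow (by linarith), Real.zero_rpow (by linarith)]
      simpa using Real.rpow_nonneg hx p
  · have hyp : (0:ℝ) < y ^ p := Real.rpow_pos_of_pos h0 p
    have hb := one_add_mul_self_le_rpow_one_add (s := x / y - 1) (by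
      have : 0 ≤ x / y := div_nonneg hx h0.le
      linarith) hp
    have hxy : (1 + (x / y - 1)) = x / y := by ring
    rw [hxy, Real.div_rpow hx h0.le] at hb
    have key := mul_le_mul_of_nonneg_left hb hyp.le
    have hys : y ^ p * (x ^ p / y ^ p) = x ^ p := by
      field_simp
    rw [hys] at key
    have hy1 : y ^ (p - 1) * y = y ^ p := by
      have : y ^ (p - 1) * y ^ (1:ℝ) = y ^ (p - 1 + 1) := (Real.rpow_add h0 _ _).symm
      rw [Real.rpow_one] at this
      rw [this]; norm_num
    have h2 : y ^ (p - 1) = y ^ p / y := by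
      rw [eq_div_iff h0.ne']; exact hy1
    calc y ^ p + p * y ^ (p - 1) * (x - y)
        = y ^ p * (1 + p * (x / y - 1)) := by
          rw [h2]; field_simp
      _ ≤ x ^ p := key

/-- Square-to-rpow conversion. -/
lemma sq_rpow_aux {X q : ℝ} (hX : 0 ≤ X) : (X ^ 2) ^ q = X ^ (2 * q) := by
  rw [← Real.rpow_natCast X 2, ← Real.rpow_mul hX]
  norm_num

/-- The key scalar inequality. -/
lemma key_scalar {s B H t : ℝ} (hs : 2 ≤ s) (hB : 0 ≤ B) (hH : 0 ≤ H)
    (ht : |t| ≤ B * H) :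
    (1 / (s * 2 ^ s)) * H ^ s ≤
      (1 / s) * (B ^ 2 + 2 * t + H ^ 2) ^ (s / 2) - (1 / s) * B ^ s - B ^ (s - 2) * t := by
  have hs0 : (0:ℝ) < s := by linarith
  have h2s : (0:ℝ) < 2 ^ s := Real.rpow_pos_of_pos two_pos s
  obtain ⟨htl, htu⟩ := abs_le.mp ht
  have hXnn : 0 ≤ B ^ 2 + 2 * t + H ^ 2 := by nlinarith [sq_nonneg (B - H)]
  -- degenerate case H = 0
  rcases eq_or_lt_of_le hH with hH0 | hH0
  · have ht0 : t = 0 := by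
      have : |t| ≤ 0 := by rw [← hH0] at ht; simpa using ht
      simpa using le_antisymm this (abs_nonneg t)
    subst ht0
    rw [← hH0, Real.zero_rpow hs0.ne']
    have : (B ^ 2 + 2 * 0 + 0 ^ 2) ^ (s / 2) = B ^ s := by
      rw [show B ^ 2 + 2 * 0 + (0:ℝ) ^ 2 = B ^ 2 by ring, sq_rpow_aux hB,
        show 2 * (s / 2) = s by ring]
    rw [this]; ring_nf; positivity
  -- degenerate case B = 0
  rcases eq_or_lt_of_le hB with hB0 | hB0
  · have ht0 : t = 0 := by
      have : |t| ≤ 0 := by rw [← hB0] at ht; simpa using ht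
      simpa using le_antisymm this (abs_nonneg t)
    subst ht0
    rw [← hB0, Real.zero_rpow hs0.ne']
    have hX : ((0:ℝ) ^ 2 + 2 * 0 + H ^ 2) ^ (s / 2) = H ^ s := by
      rw [show (0:ℝ) ^ 2 + 2 * 0 + H ^ 2 = H ^ 2 by ring, sq_rpow_aux hH,
        show 2 * (s / 2) = s by ring]
    rw [hX]
    have hHs : 0 ≤ H ^ s := Real.rpow_nonneg hH s
    have h1 : (1:ℝ) ≤ 2 ^ s := by
      calc (1:ℝ) = 2 ^ (0:ℝ) := by norm_num
        _ ≤ 2 ^ s := Real.rpow_le_rpow_of_exponent_le one_le_two hs0.le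
    have e0 : (0:ℝ) ^ (s - 2) * 0 = 0 := by ring
    rw [e0]
    have hcc : 1 / (s * 2 ^ s) ≤ 1 / s := by
      apply one_div_le_one_div_of_le hs0
      nlinarith
    have := mul_le_mul_of_nonneg_right hcc hHs
    linarith
  -- main case : B > 0, H > 0
  have hBs2 : B ^ (s - 2) = (B ^ 2) ^ (s / 2 - 1) := by
    rw [sq_rpow_aux hB, show 2 * (s / 2 - 1) = s - 2 by ring]
  have hBs : B ^ s = (B ^ 2) ^ (s / 2) := by
    rw [sq_rpow_aux hB, show 2 * (s / 2) = s by ring]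
  by_cases hcase : H ≤ 2 * B
  · -- tangent at y = B ^ 2
    have tang := rpow_tangent_aux (x := B ^ 2 + 2 * t + H ^ 2) (y := B ^ 2)
      hXnn (sq_nonneg B) (p := s / 2) (by linarith)
    rw [← hBs, ← hBs2] at tang
    -- tang : B^s + (s/2) * B^(s-2) * (2t + H^2) ≤ X^(s/2)
    have step : (1 / s) * B ^ s + B ^ (s - 2) * t + (1 / 2) * B ^ (s - 2) * H ^ 2
        ≤ (1 / s) * (B ^ 2 + 2 * t + H ^ 2) ^ (s / 2) := by
      have := mul_le_mul_of_nonneg_left tang (le_of_lt (one_div_pos.mpr hs0))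
      calc (1 / s) * B ^ s + B ^ (s - 2) * t + (1 / 2) * B ^ (s - 2) * H ^ 2
          = (1 / s) * (B ^ s + s / 2 * B ^ (s - 2) * (B ^ 2 + 2 * t + H ^ 2 - B ^ 2)) := by
            field_simp; ring
        _ ≤ _ := this
    -- now need : c * H^s ≤ (1/2) * B^(s-2) * H^2
    have hHB : H / 2 ≤ B := by linarith
    have hmono : (H / 2) ^ (s - 2) ≤ B ^ (s - 2) :=
      Real.rpow_le_rpow (by positivity) hHB (by linarith)
    rw [Real.div_rpow hH (by norm_num)] at hmono
    have hHs2 : H ^ (s - 2) * H ^ 2 = H ^ s := by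
      rw [← Real.rpow_natCast H 2, ← Real.rpow_add hH0]
      norm_num
    have h2s2 : 2 ^ (s - 2) * 4 = (2:ℝ) ^ s := by
      rw [show (4:ℝ) = 2 ^ (2:ℝ) by
        rw [show (2:ℝ) = ((2:ℕ):ℝ) by norm_num, Real.rpow_natCast]; norm_num,
        ← Real.rpow_add two_pos]
      norm_num
    have h2s2pos : (0:ℝ) < 2 ^ (s - 2) := Real.rpow_pos_of_pos two_pos _
    have hgoal : (1 / (s * 2 ^ s)) * H ^ s ≤ (1 / 2) * B ^ (s - 2) * H ^ 2 := by
      rw [div_mul_eq_mul_div, one_mul, div_le_iff₀ (by positivity)]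
      have h1 := mul_le_mul_of_nonneg_right hmono (sq_nonneg H)
      rw [div_mul_eq_mul_div, hHs2] at h1
      rw [div_le_iff₀ h2s2pos] at h1
      -- h1 : H^s ≤ B^(s-2) * H^2 * 2^(s-2)
      have hq := mul_le_mul_of_nonneg_right h1 (show (0:ℝ) ≤ 4 * s by positivity)
      have hq2 : B ^ (s - 2) * H ^ 2 * 2 ^ (s - 2) * (4 * s)
          = B ^ (s - 2) * H ^ 2 * 2 ^ s * s := by
        linear_combination (B ^ (s - 2) * H ^ 2 * s) * h2s2
      rw [hq2] at hq
      have hpos := mul_nonneg (Real.rpow_nonneg hH s)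
        (show (0:ℝ) ≤ 2 * s - 1 by linarith)
      nlinarith [hq, hpos]
    linarith
  · -- tangent at y = (H - B) ^ 2
    push_neg at hcase
    have hD0 : 0 < H - B := by linarith
    have hDs2 : (H - B) ^ (s - 2) = ((H - B) ^ 2) ^ (s / 2 - 1) := by
      rw [sq_rpow_aux hD0.le, show 2 * (s / 2 - 1) = s - 2 by ring]
    have hDs : (H - B) ^ s = ((H - B) ^ 2) ^ (s / 2) := by
      rw [sq_rpow_aux hD0.le, show 2 * (s / 2) = s by ring]
    have tang := rpow_tangent_aux (x := B ^ 2 + 2 * t + H ^ 2) (y := (H - B) ^ 2)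
      hXnn (sq_nonneg _) (p := s / 2) (by linarith)
    rw [← hDs, ← hDs2] at tang
    have step : (1 / s) * (H - B) ^ s + (H - B) ^ (s - 2) * (t + B * H)
        ≤ (1 / s) * (B ^ 2 + 2 * t + H ^ 2) ^ (s / 2) := by
      have := mul_le_mul_of_nonneg_left tang (le_of_lt (one_div_pos.mpr hs0))
      calc (1 / s) * (H - B) ^ s + (H - B) ^ (s - 2) * (t + B * H)
          = (1 / s) * ((H - B) ^ s
              + s / 2 * (H - B) ^ (s - 2) * (B ^ 2 + 2 * t + H ^ 2 - (H - B) ^ 2)) := by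
            field_simp; ring
        _ ≤ _ := this
    -- coefficient comparison
    have hcoef : B ^ (s - 2) ≤ (H - B) ^ (s - 2) :=
      Real.rpow_le_rpow hB (by linarith) (by linarith)
    -- (1/s) B^s ≤ B^(s-2) * B * H
    have hBs' : B ^ s = B ^ (s - 2) * B ^ 2 := by
      rw [← Real.rpow_natCast B 2, ← Real.rpow_add hB0]
      norm_num
    have hBH : (1 / s) * B ^ s ≤ B ^ (s - 2) * (B * H) := by
      have h1 : B ^ s ≤ B ^ (s - 2) * (B * H) := by
        rw [hBs']
        have : B ^ 2 ≤ B * H := by nlinarith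
        nlinarith [Real.rpow_nonneg hB (s - 2)]
      have h2 : (1 / s) * B ^ s ≤ B ^ s :=
        mul_le_of_le_one_left (Real.rpow_nonneg hB s)
          (by rw [div_le_one hs0]; linarith)
      linarith
    -- (H/2)^s ≤ (H-B)^s
    have hDH : (H / 2) ^ s ≤ (H - B) ^ s :=
      Real.rpow_le_rpow (by positivity) (by linarith) hs0.le
    rw [Real.div_rpow hH (by norm_num)] at hDH
    -- combine
    have hc : (1 / (s * 2 ^ s)) * H ^ s ≤ (1 / s) * (H - B) ^ s := by
      rw [div_mul_eq_mul_div, one_mul, div_le_iff₀ (by positivity)]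
      have := mul_le_mul_of_nonneg_left hDH (le_of_lt (one_div_pos.mpr hs0))
      calc H ^ s = (1 / s) * (H ^ s / 2 ^ s) * (s * 2 ^ s) := by field_simp
        _ ≤ (1 / s) * (H - B) ^ s * (s * 2 ^ s) := by
            apply mul_le_mul_of_nonneg_right this (by positivity)
    -- (H-B)^(s-2)*(t+BH) - B^(s-2)*t ≥ B^(s-2)*B*H
    have hterm : B ^ (s - 2) * (B * H)
        ≤ (H - B) ^ (s - 2) * (t + B * H) - B ^ (s - 2) * t := by
      have := mul_le_mul_of_nonneg_right hcoef (show (0:ℝ) ≤ t + B * H by linarith)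
      nlinarith [this]
    linarith

/-- For every `s ≥ 2` there is a constant `c > 0` depending only on `s` such that for all
`a, b ∈ ℝ^d`, the Bregman distance of `(1/s)|·|^s` satisfies
`(1/s)|a|^s − (1/s)|b|^s − ⟨|b|^{s−2} b, a − b⟩ ≥ c |a − b|^s`. -/
theorem sLaplacian_bregman_lower_bound :
    ∀ s : ℝ, 2 ≤ s → ∃ c : ℝ, 0 < c ∧
      ∀ d : ℕ, ∀ a b : EuclideanSpace ℝ (Fin d),
        c * ‖a - b‖ ^ s ≤
          (1 / s) * ‖a‖ ^ s - (1 / s) * ‖b‖ ^ s - ⟪(‖b‖ ^ (s - 2)) • b, a - b⟫ := by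
  intro s hs
  have hs0 : (0:ℝ) < s := by linarith
  have h2s : (0:ℝ) < 2 ^ s := Real.rpow_pos_of_pos two_pos s
  refine ⟨1 / (s * 2 ^ s), by positivity, ?_⟩
  intro d a b
  have key := key_scalar (B := ‖b‖) (H := ‖a - b‖) (t := ⟪b, a - b⟫) hs
    (norm_nonneg b) (norm_nonneg (a - b)) (abs_real_inner_le_norm b (a - b))
  rw [real_inner_smul_left]
  have hna : ‖a‖ ^ 2 = ‖b‖ ^ 2 + 2 * ⟪b, a - b⟫ + ‖a - b‖ ^ 2 := by
    have h := norm_add_sq_real b (a - b)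
    rwa [show b + (a - b) = a from by abel] at h
  have hnas : ‖a‖ ^ s = (‖b‖ ^ 2 + 2 * ⟪b, a - b⟫ + ‖a - b‖ ^ 2) ^ (s / 2) := by
    rw [← hna, sq_rpow_aux (norm_nonneg a), show 2 * (s / 2) = s by ring]
  rw [hnas]
  exact key
end

section
/- Let V be a finite-dimensional real inner product space, F : V → ℝ convex and differentiable with L-Lipschitz continuous gradient, G : V → ℝ convex and continuous, E = F + G, and let u* be a minimizer of E. Fix τ ∈ (0, 1/L] and u^(0) = v^(0) ∈ V, t_0 = 1, and for n ≥ 0 define u^(n+1) as the minimizer over V of u ↦ F(v^(n)) + ⟨∇F(v^(n)), u − v^(n)⟩ + (1/(2τ))‖u − v^(n)‖² + G(u), t_{n+1} = (1 + √(1 + 4t_n²))/2, β_n = (t_n − 1)/t_{n+1}, and v^(n+1) = u^(n+1) + β_n(u^(n+1) − u^(n)). Then for every n ≥ 1, E(u^(n)) − E(u*) ≤ 2‖u^(0) − u*‖² / (τ(n + 1)²). -/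
open RealInnerProductSpace

lemma fista_combo_norm_sq {V : Type*} [NormedAddCommGroup V] [InnerProductSpace ℝ V]
    (a b : V) (l : ℝ) :
    ‖(1 - l) • a + l • b‖ ^ 2
      = (1 - l) * ‖a‖ ^ 2 + l * ‖b‖ ^ 2 - l * (1 - l) * ‖b - a‖ ^ 2 := by
  simp only [← real_inner_self_eq_norm_sq]
  simp only [inner_add_left, inner_add_right, inner_sub_left, inner_sub_right,
    real_inner_smul_left, real_inner_smul_right, real_inner_comm b a]
  ring

lemma fista_grad_convex_le {V : Type*} [NormedAddCommGroup V] [InnerProductSpace ℝ V] [CompleteSpace V]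
    {F : V → ℝ} {g w : V} (hconv : ConvexOn ℝ Set.univ F)
    (hg : HasGradientAt F g w) (z : V) : F w + ⟪g, z - w⟫ ≤ F z := by
  rcases eq_or_ne z w with rfl | hne
  · simp
  set φ : ℝ → ℝ := fun s => F (s • (z - w) + w) with hφ
  have hφconv : ConvexOn ℝ Set.univ φ := by
    have h := hconv.comp_affineMap (AffineMap.lineMap w z)
    simpa [φ, AffineMap.lineMap_apply, Function.comp_def] using h
  have hline : HasDerivAt (fun s : ℝ => s • (z - w) + w) (z - w) 0 := by
    simpa using ((hasDerivAt_id (0:ℝ)).smul_const (z - w)).add_const w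
  have hF : HasFDerivAt F (InnerProductSpace.toDual ℝ V g) w := hg
  have hcomp : HasDerivAt φ ⟪g, z - w⟫ 0 := by
    have hF' : HasFDerivAt F (InnerProductSpace.toDual ℝ V g) ((0:ℝ) • (z - w) + w) := by
      simpa using hF
    have h := hF'.comp_hasDerivAt 0 hline
    simpa [φ, Function.comp_def] using h
  have hs := hφconv.le_slope_of_hasDerivAt (Set.mem_univ 0) (Set.mem_univ 1) zero_lt_one hcomp
  have : slope φ 0 1 = F z - F w := by
    simp [slope_def_field, φ]
  rw [this] at hs
  linarith

lemma fista_key {V : Type*} [NormedAddCommGroup V] [InnerProductSpace ℝ V] [CompleteSpace V]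
    {F : V → ℝ} {F' : V → V} {L : ℝ} (hL : 0 < L)
    (hFconv : ConvexOn ℝ Set.univ F)
    (hgrad : ∀ x : V, HasGradientAt F (F' x) x)
    (hsmooth : ∀ u v : V, F u ≤ F v + ⟪F' v, u - v⟫ + (L / 2) * ‖u - v‖ ^ 2)
    {G : V → ℝ} (hGconv : ConvexOn ℝ Set.univ G)
    {τ : ℝ} (hτ0 : 0 < τ) (hτL : τ ≤ 1 / L)
    {w p : V}
    (hupd : ∀ z : V, F w + ⟪F' w, p - w⟫ + (1/(2*τ)) * ‖p - w‖^2 + G p ≤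
                     F w + ⟪F' w, z - w⟫ + (1/(2*τ)) * ‖z - w‖^2 + G z)
    (z : V) :
    (F p + G p) + (1/(2*τ)) * ‖p - z‖^2 ≤ (F z + G z) + (1/(2*τ)) * ‖w - z‖^2 := by
  have hτinv : (0:ℝ) < 1/(2*τ) := by positivity
  set g := F' w with hg
  set Q : V → ℝ := fun x => F w + ⟪g, x - w⟫ + (1/(2*τ)) * ‖x - w‖^2 + G x with hQ
  -- strong minimality
  have hstrong : Q p + (1/(2*τ)) * ‖z - p‖^2 ≤ Q z := by
    set c := (1/(2*τ)) * ‖z - p‖^2 with hc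
    have hc0 : 0 ≤ c := by positivity
    refine le_of_forall_pos_le_add (fun ε hε => ?_)
    set l : ℝ := min 1 (ε/(c+1)) with hl
    have hl0 : 0 < l := lt_min one_pos (by positivity)
    have hl1 : l ≤ 1 := min_le_left _ _
    set m : V := (1 - l) • p + l • z with hm
    have hmw : m - w = (1 - l) • (p - w) + l • (z - w) := by
      rw [hm]; module
    have hnorm : ‖m - w‖^2 = (1-l) * ‖p - w‖^2 + l * ‖z - w‖^2 - l*(1-l) * ‖z - p‖^2 := by
      rw [hmw, fista_combo_norm_sq]
      congr 3
      abel_nf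
    have hinner : ⟪g, m - w⟫ = (1-l) * ⟪g, p - w⟫ + l * ⟪g, z - w⟫ := by
      rw [hmw, inner_add_right, real_inner_smul_right, real_inner_smul_right]
    have hGm : G m ≤ (1-l) * G p + l * G z :=
      hGconv.2 (Set.mem_univ p) (Set.mem_univ z) (by linarith) hl0.le (by ring)
    have h1 := hupd m
    have h2 : Q p ≤ (1-l) * Q p + l * Q z - (1/(2*τ)) * (l*(1-l)) * ‖z - p‖^2 := by
      calc Q p ≤ F w + ⟪g, m - w⟫ + (1/(2*τ)) * ‖m - w‖^2 + G m := h1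
        _ ≤ F w + ⟪g, m - w⟫ + (1/(2*τ)) * ‖m - w‖^2 + ((1-l) * G p + l * G z) := by linarith
        _ = (1-l) * Q p + l * Q z - (1/(2*τ)) * (l*(1-l)) * ‖z - p‖^2 := by
            rw [hnorm, hinner]; simp only [hQ]; ring
    -- divide by l
    have h2' : l * (Q p + (1-l) * c) ≤ l * Q z := by
      rw [hc]; linarith [h2]
    have h3 : Q p + (1-l) * c ≤ Q z := le_of_mul_le_mul_left h2' hl0
    have hlc : l * c ≤ ε := by
      have h4 : l ≤ ε/(c+1) := min_le_right _ _
      have : l * c ≤ (ε/(c+1)) * c := mul_le_mul_of_nonneg_right h4 hc0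
      have h5 : (ε/(c+1)) * c ≤ ε := by
        rw [div_mul_eq_mul_div, div_le_iff₀ (by linarith)]
        nlinarith
      linarith
    linarith
  -- E p ≤ Q p
  have hLτ : L/2 ≤ 1/(2*τ) := by
    rw [div_le_div_iff₀ (by norm_num) (by positivity)]
    have : τ * L ≤ 1 := (le_div_iff₀ hL).mp hτL
    nlinarith
  have hEp : F p + G p ≤ Q p := by
    have h6 := hsmooth p w
    have : (L/2) * ‖p - w‖^2 ≤ (1/(2*τ)) * ‖p - w‖^2 :=
      mul_le_mul_of_nonneg_right hLτ (by positivity)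
    simp only [hQ]
    linarith
  -- F z ≥ F w + ⟪g, z - w⟫
  have hFz : F w + ⟪g, z - w⟫ ≤ F z := fista_grad_convex_le hFconv (hgrad w) z
  have hQz : Q z ≤ F z + G z + (1/(2*τ)) * ‖z - w‖^2 := by
    simp only [hQ]; linarith
  have e1 : ‖p - z‖ = ‖z - p‖ := norm_sub_rev _ _
  have e2 : ‖w - z‖ = ‖z - w‖ := norm_sub_rev _ _
  rw [e1, e2]
  simp only [hQ] at hstrong hEp hQz
  linarith

lemma fista_norm_identity {V : Type*} [NormedAddCommGroup V] [InnerProductSpace ℝ V]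
    (T : ℝ) (a b vv s : V) :
    T*(T-1)*(‖a-b‖^2 - ‖vv-b‖^2) + T*(‖a-s‖^2 - ‖vv-s‖^2)
      = ‖T•a - (T-1)•b - s‖^2 - ‖T•vv - (T-1)•b - s‖^2 := by
  simp only [← real_inner_self_eq_norm_sq]
  simp only [inner_sub_left, inner_sub_right, real_inner_smul_left, real_inner_smul_right,
    real_inner_comm b a, real_inner_comm s a, real_inner_comm b vv, real_inner_comm s vv,
    real_inner_comm s b]
  ring

/-- FISTA convergence: for a convex `F` with `L`-Lipschitz gradient and a convex
continuous `G`, with step size `τ ∈ (0, 1/L]`, the FISTA iterates satisfy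
`E(uⁿ) − E(u*) ≤ 2‖u⁰ − u*‖² / (τ(n+1)²)` for all `n ≥ 1`. -/
theorem fista_convergence
    {V : Type*} [NormedAddCommGroup V] [InnerProductSpace ℝ V] [FiniteDimensional ℝ V]
    (F : V → ℝ) (F' : V → V) (L : ℝ) (hL : 0 < L)
    (hFconv : ConvexOn ℝ Set.univ F)
    (hgrad : ∀ x : V, HasGradientAt F (F' x) x)
    (hsmooth : ∀ u v : V, F u ≤ F v + ⟪F' v, u - v⟫ + (L / 2) * ‖u - v‖ ^ 2)
    (G : V → ℝ) (hGconv : ConvexOn ℝ Set.univ G) (hGcont : Continuous G)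
    (E : V → ℝ) (hE : ∀ x, E x = F x + G x)
    (ustar : V) (hustar : ∀ x, E ustar ≤ E x)
    (τ : ℝ) (hτ0 : 0 < τ) (hτL : τ ≤ 1 / L)
    (u v : ℕ → V) (t β : ℕ → ℝ)
    (h0 : u 0 = v 0) (ht0 : t 0 = 1)
    (hupd : ∀ n : ℕ, ∀ z : V,
      F (v n) + ⟪F' (v n), u (n + 1) - v n⟫ + (1 / (2 * τ)) * ‖u (n + 1) - v n‖ ^ 2
          + G (u (n + 1)) ≤
        F (v n) + ⟪F' (v n), z - v n⟫ + (1 / (2 * τ)) * ‖z - v n‖ ^ 2 + G z)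
    (htrec : ∀ n : ℕ, t (n + 1) = (1 + Real.sqrt (1 + 4 * t n ^ 2)) / 2)
    (hβ : ∀ n : ℕ, β n = (t n - 1) / t (n + 1))
    (hv : ∀ n : ℕ, v (n + 1) = u (n + 1) + β n • (u (n + 1) - u n)) :
    ∀ n : ℕ, 1 ≤ n →
      E (u n) - E ustar ≤ 2 * ‖u 0 - ustar‖ ^ 2 / (τ * ((n : ℝ) + 1) ^ 2) := by
  -- key inequality
  have key : ∀ (n : ℕ) (z : V),
      E (u (n+1)) + (1/(2*τ)) * ‖u (n+1) - z‖^2 ≤ E z + (1/(2*τ)) * ‖v n - z‖^2 := by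
    intro n z
    have h := fista_key hL hFconv hgrad hsmooth hGconv hτ0 hτL (hupd n) z
    rw [hE (u (n+1)), hE z]
    exact h
  have key' : ∀ (n : ℕ) (z : V),
      ‖u (n+1) - z‖^2 - ‖v n - z‖^2 ≤ 2*τ*(E z - E (u (n+1))) := by
    intro n z
    have h := key n z
    have hτpos : (0:ℝ) < 2*τ := by linarith
    have h2 : (1/(2*τ)) * (‖u (n+1) - z‖^2 - ‖v n - z‖^2) ≤ E z - E (u (n+1)) := by
      linarith
    have h3 := mul_le_mul_of_nonneg_left h2 hτpos.le
    calc ‖u (n+1) - z‖^2 - ‖v n - z‖^2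
        = 2*τ*((1/(2*τ)) * (‖u (n+1) - z‖^2 - ‖v n - z‖^2)) := by field_simp
      _ ≤ 2*τ*(E z - E (u (n+1))) := h3
  -- t sequence facts
  have ht_lb : ∀ n : ℕ, ((n:ℝ)+2)/2 ≤ t n := by
    intro n
    induction n with
    | zero => simp [ht0]
    | succ k ih =>
      have hk0 : (0:ℝ) ≤ (k:ℝ) := Nat.cast_nonneg k
      have htk : 0 < t k := by linarith
      have hs : 2 * t k ≤ Real.sqrt (1 + 4 * t k ^ 2) := by
        have h1 : Real.sqrt ((2 * t k)^2) = 2 * t k := Real.sqrt_sq (by linarith)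
        rw [← h1]
        apply Real.sqrt_le_sqrt
        nlinarith
      rw [htrec k]
      push_cast
      linarith
  have ht1 : ∀ n : ℕ, 1 ≤ t n := by
    intro n
    have hk0 : (0:ℝ) ≤ (n:ℝ) := Nat.cast_nonneg n
    have := ht_lb n
    linarith
  have htsq : ∀ n : ℕ, t (n+1)^2 - t (n+1) = t n ^ 2 := by
    intro n
    have h1 : (0:ℝ) ≤ 1 + 4 * t n ^ 2 := by positivity
    have h2 : Real.sqrt (1 + 4 * t n ^ 2) ^ 2 = 1 + 4 * t n ^ 2 := Real.sq_sqrt h1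
    rw [htrec n]
    linear_combination h2 / 4
  have htβ : ∀ n : ℕ, t (n+1) * β n = t n - 1 := by
    intro n
    have hne : t (n+1) ≠ 0 := by
      have := ht1 (n+1); intro h; rw [h] at this; linarith
    rw [hβ n]
    field_simp
  -- the Lyapunov sequence
  set w : ℕ → V := fun n => t n • u (n+1) - (t n - 1) • u n - ustar with hw
  set c : ℕ → ℝ := fun n => 2*τ*(t n)^2*(E (u (n+1)) - E ustar) + ‖w n‖^2 with hc
  have hmono : ∀ n : ℕ, c (n+1) ≤ c n := by
    intro n
    set T := t (n+1) with hT
    have hT1 : 1 ≤ T := ht1 (n+1)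
    have k1' := key' (n+1) (u (n+1))
    have k2' := key' (n+1) ustar
    -- combination vector identity
    have hcomb : T • v (n+1) - (T-1) • u (n+1) = t n • u (n+1) - (t n - 1) • u n := by
      rw [hv n, smul_add, smul_smul, htβ n, smul_sub]
      module
    have hid := fista_norm_identity T (u (n+2)) (u (n+1)) (v (n+1)) ustar
    have hw1 : T • u (n+2) - (T-1) • u (n+1) - ustar = w (n+1) := by
      simp only [hw, hT]
    have hw0 : T • v (n+1) - (T-1) • u (n+1) - ustar = w n := by
      rw [hcomb]
    rw [hw1, hw0] at hid
    have m1 := mul_le_mul_of_nonneg_left k1'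
      (mul_nonneg (by linarith : (0:ℝ) ≤ T) (by linarith : (0:ℝ) ≤ T - 1))
    have m2 := mul_le_mul_of_nonneg_left k2' (by linarith : (0:ℝ) ≤ T)
    have hTT := htsq n
    simp only [hc]
    rw [← hT, ← hTT]
    nlinarith [hid, m1, m2]
  have hcmono : ∀ n : ℕ, c n ≤ c 0 := by
    intro n
    induction n with
    | zero => exact le_rfl
    | succ k ih => exact le_trans (hmono k) ih
  have hc0 : c 0 ≤ ‖u 0 - ustar‖^2 := by
    have k2' := key' 0 ustar
    rw [← h0] at k2'
    have hw00 : w 0 = u 1 - ustar := by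
      simp only [hw, ht0]
      simp
    simp only [hc, hw00, ht0]
    have hρ : 0 ≤ E (u 1) - E ustar := by linarith [hustar (u 1)]
    nlinarith [k2']
  -- conclusion
  intro n hn
  obtain ⟨m, rfl⟩ : ∃ m, n = m + 1 := ⟨n - 1, by omega⟩
  have hbound : 2*τ*(t m)^2*(E (u (m+1)) - E ustar) ≤ ‖u 0 - ustar‖^2 := by
    have h1 : c m ≤ ‖u 0 - ustar‖^2 := le_trans (hcmono m) hc0
    have h2 : 0 ≤ ‖w m‖^2 := by positivity
    simp only [hc] at h1
    linarith
  have hρ : 0 ≤ E (u (m+1)) - E ustar := by linarith [hustar (u (m+1))]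
  have htm : ((m:ℝ)+2)/2 ≤ t m := ht_lb m
  have h2' : ((m:ℝ)+2)^2/4 ≤ t m^2 := by nlinarith [htm, Nat.cast_nonneg (α := ℝ) m]
  push_cast
  have hcast : ((m:ℝ) + 1 + 1) = (m:ℝ) + 2 := by ring
  rw [hcast, le_div_iff₀ (by positivity : (0:ℝ) < τ * ((m:ℝ)+2)^2)]
  have hA := mul_le_mul_of_nonneg_left h2' (mul_nonneg hτ0.le hρ)
  nlinarith [hbound, hA]
end

section
/- Let V be a finite-dimensional real inner product space, F : V → ℝ convex and differentiable with L-Lipschitz continuous gradient, G : V → ℝ convex and continuous, E = F + G, and let u* be a minimizer of E. Fix τ ∈ (0, 1/L] and u^(0) ∈ V, and for n ≥ 0 define u^(n+1) as the minimizer over V of u ↦ F(u^(n)) + ⟨∇F(u^(n)), u − u^(n)⟩ + (1/(2τ))‖u − u^(n)‖² + G(u). Then for every n ≥ 1, E(u^(n)) − E(u*) ≤ ‖u^(0) − u*‖² / (2τn). -/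
open RealInnerProductSpace

theorem norm_combo_sq {V : Type*} [NormedAddCommGroup V] [InnerProductSpace ℝ V]
    (a b : V) (t : ℝ) (h1 : 0 ≤ t) (h2 : 0 ≤ 1 - t) :
    ‖(1 - t) • a + t • b‖ ^ 2 =
      (1-t)^2 * ‖a‖^2 + 2*((1-t)*t)*⟪a, b⟫ + t^2*‖b‖^2 := by
  rw [norm_add_sq_real, norm_smul, norm_smul, real_inner_smul_left, real_inner_smul_right,
    Real.norm_eq_abs, Real.norm_eq_abs, abs_of_nonneg h2, abs_of_nonneg h1]
  ring

/-- Gradient inequality for convex functions. -/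
theorem grad_ineq_aux {V : Type*} [NormedAddCommGroup V] [InnerProductSpace ℝ V]
    [FiniteDimensional ℝ V]
    (F : V → ℝ) (hFconv : ConvexOn ℝ Set.univ F) (x g : V)
    (hg : HasGradientAt F g x) (z : V) : F x + ⟪g, z - x⟫ ≤ F z := by
  have hline : HasDerivAt (fun t : ℝ => x + t • (z - x)) (z - x) 0 := by
    simpa using ((hasDerivAt_id (0:ℝ)).smul_const (z - x)).const_add x
  have hcomp : HasDerivAt (fun t : ℝ => F (x + t • (z - x))) ⟪g, z - x⟫ 0 := by
    have hg' : HasFDerivAt F (InnerProductSpace.toDual ℝ V g) (x + (0:ℝ) • (z-x)) := by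
      simpa using hg.hasFDerivAt
    have := hg'.comp_hasDerivAt 0 hline
    simpa [InnerProductSpace.toDual_apply_apply, Function.comp_def] using this
  have hslope : Filter.Tendsto (slope (fun t : ℝ => F (x + t • (z - x))) 0)
      (nhdsWithin 0 (Set.Ioi (0:ℝ))) (nhds ⟪g, z - x⟫) := by
    refine (hasDerivAt_iff_tendsto_slope.mp hcomp).mono_left ?_
    exact nhdsWithin_mono 0 (fun t ht => by simp [ne_of_gt (Set.mem_Ioi.mp ht)])
  have hmem : Set.Ioo (0:ℝ) 1 ∈ nhdsWithin 0 (Set.Ioi (0:ℝ)) :=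
    Ioo_mem_nhdsGT_of_mem (by norm_num)
  have hbound : ∀ t ∈ Set.Ioo (0:ℝ) 1,
      slope (fun t : ℝ => F (x + t • (z - x))) 0 t ≤ F z - F x := by
    intro t ht
    have hconv := hFconv.2 (Set.mem_univ x) (Set.mem_univ z)
      (by linarith [ht.1, ht.2] : (0:ℝ) ≤ 1 - t) (le_of_lt ht.1) (by ring)
    have hxt : x + t • (z - x) = (1 - t) • x + t • z := by
      simp [smul_sub, sub_smul]; abel
    rw [slope_def_field]
    simp only [sub_zero, zero_smul, add_zero]
    rw [div_le_iff₀ ht.1]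
    have : F (x + t • (z - x)) ≤ (1 - t) * F x + t * F z := by
      rw [hxt]; simpa [smul_eq_mul] using hconv
    nlinarith
  have := le_of_tendsto hslope (Filter.eventually_of_mem hmem hbound)
  linarith

/-- Three-point inequality for the minimizer of a `c`-strongly-convex objective. -/
theorem three_point_aux {V : Type*} [NormedAddCommGroup V] [InnerProductSpace ℝ V]
    (G : V → ℝ) (hGconv : ConvexOn ℝ Set.univ G)
    (p w x : V) (c : ℝ)
    (hmin : ∀ z : V, ⟪p, x - w⟫ + c * ‖x - w‖ ^ 2 + G x ≤ ⟪p, z - w⟫ + c * ‖z - w‖ ^ 2 + G z)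
    (z : V) :
    ⟪p, x - w⟫ + c * ‖x - w‖ ^ 2 + G x + c * ‖z - x‖ ^ 2 ≤
      ⟪p, z - w⟫ + c * ‖z - w‖ ^ 2 + G z := by
  have key : ∀ t : ℝ, 0 < t → t < 1 →
      ⟪p, x - w⟫ + c * ‖x - w‖ ^ 2 + G x + c * (1 - t) * ‖z - x‖ ^ 2 ≤
        ⟪p, z - w⟫ + c * ‖z - w‖ ^ 2 + G z := by
    intro t ht0 ht1
    set y := (1 - t) • x + t • z with hy
    have hGy : G y ≤ (1 - t) * G x + t * G z := by
      simpa [smul_eq_mul] using hGconv.2 (Set.mem_univ x) (Set.mem_univ z)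
        (by linarith : (0:ℝ) ≤ 1 - t) ht0.le (by ring)
    have hmy := hmin y
    have hinner : ⟪p, y - w⟫ = (1 - t) * ⟪p, x - w⟫ + t * ⟪p, z - w⟫ := by
      have : y - w = (1 - t) • (x - w) + t • (z - w) := by
        rw [hy]; rw [smul_sub, smul_sub]; module
      rw [this, inner_add_right, real_inner_smul_right, real_inner_smul_right]
    have hnorm : ‖y - w‖ ^ 2 =
        (1 - t) * ‖x - w‖ ^ 2 + t * ‖z - w‖ ^ 2 - t * (1 - t) * ‖z - x‖ ^ 2 := by
      have h1 : y - w = (1 - t) • (x - w) + t • (z - w) := by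
        rw [hy]; rw [smul_sub, smul_sub]; module
      have h2 : z - x = (z - w) - (x - w) := by abel
      have e1 : ‖(1 - t) • (x - w) + t • (z - w)‖ ^ 2 =
          (1-t)^2 * ‖x - w‖^2 + 2*((1-t)*t)*⟪x - w, z - w⟫ + t^2*‖z - w‖^2 :=
        norm_combo_sq (x - w) (z - w) t ht0.le (by linarith)
      have e2 : ‖(z - w) - (x - w)‖ ^ 2 = ‖z - w‖^2 - 2*⟪z - w, x - w⟫ + ‖x - w‖^2 := by
        rw [norm_sub_sq_real]
      rw [h1, h2, e1, e2, real_inner_comm (z-w) (x-w)]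
      ring
    rw [hinner, hnorm] at hmy
    nlinarith [hmy, hGy]
  refine le_of_forall_pos_le_add fun ε hε => ?_
  rcases lt_or_ge (c * ‖z - x‖ ^ 2) ε with h | h
  · have := key (1/2) (by norm_num) (by norm_num)
    nlinarith
  · have hd : 0 < c * ‖z - x‖ ^ 2 := lt_of_lt_of_le hε h
    set t := ε / (2 * (c * ‖z - x‖ ^ 2)) with htdef
    have ht0 : 0 < t := div_pos hε (by linarith)
    have ht1 : t < 1 := by
      rw [htdef, div_lt_one (by linarith)]; linarith
    have := key t ht0 ht1
    have htd : c * t * ‖z - x‖ ^ 2 ≤ ε := by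
      rw [htdef]
      rw [mul_comm c, mul_assoc, div_mul_eq_mul_div, mul_comm]
      rw [div_le_iff₀ (by linarith : (0:ℝ) < 2 * (c * ‖z - x‖ ^ 2))]
      nlinarith
    nlinarith

/-- Forward-backward splitting convergence: for a convex `F` with `L`-Lipschitz gradient
and a convex continuous `G`, with step size `τ ∈ (0, 1/L]`, the iterates satisfy
`E(uⁿ) − E(u*) ≤ ‖u⁰ − u*‖² / (2τn)` for all `n ≥ 1`. -/
theorem forward_backward_convergence
    {V : Type*} [NormedAddCommGroup V] [InnerProductSpace ℝ V] [FiniteDimensional ℝ V]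
    (F : V → ℝ) (F' : V → V) (L : ℝ) (hL : 0 < L)
    (hFconv : ConvexOn ℝ Set.univ F)
    (hgrad : ∀ x : V, HasGradientAt F (F' x) x)
    (hsmooth : ∀ u v : V, F u ≤ F v + ⟪F' v, u - v⟫ + (L / 2) * ‖u - v‖ ^ 2)
    (G : V → ℝ) (hGconv : ConvexOn ℝ Set.univ G) (hGcont : Continuous G)
    (E : V → ℝ) (hE : ∀ x, E x = F x + G x)
    (ustar : V) (hustar : ∀ x, E ustar ≤ E x)
    (τ : ℝ) (hτ0 : 0 < τ) (hτL : τ ≤ 1 / L)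
    (u : ℕ → V)
    (hupd : ∀ n : ℕ, ∀ z : V,
      F (u n) + ⟪F' (u n), u (n + 1) - u n⟫ + (1 / (2 * τ)) * ‖u (n + 1) - u n‖ ^ 2
          + G (u (n + 1)) ≤
        F (u n) + ⟪F' (u n), z - u n⟫ + (1 / (2 * τ)) * ‖z - u n‖ ^ 2 + G z) :
    ∀ n : ℕ, 1 ≤ n →
      E (u n) - E ustar ≤ ‖u 0 - ustar‖ ^ 2 / (2 * τ * (n : ℝ)) := by
  set c : ℝ := 1 / (2 * τ) with hcdef
  have hc : 0 < c := by positivity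
  have hLc : L / 2 ≤ c := by
    rw [hcdef, div_le_div_iff₀ (by norm_num) (by linarith)]
    have : L * τ ≤ 1 := by
      have := (le_div_iff₀ hL).mp hτL
      linarith
    nlinarith
  -- key per-step estimate
  have step : ∀ n : ℕ, ∀ z : V,
      E (u (n+1)) ≤ E z + c * (‖z - u n‖ ^ 2 - ‖z - u (n+1)‖ ^ 2) := by
    intro n z
    have hmin : ∀ y : V, ⟪F' (u n), u (n+1) - u n⟫ + c * ‖u (n+1) - u n‖ ^ 2 + G (u (n+1)) ≤
        ⟪F' (u n), y - u n⟫ + c * ‖y - u n‖ ^ 2 + G y := by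
      intro y; have := hupd n y; rw [hcdef]; linarith
    have tp := three_point_aux G hGconv (F' (u n)) (u n) (u (n+1)) c hmin z
    have smooth := hsmooth (u (n+1)) (u n)
    have gi := grad_ineq_aux F hFconv (u n) (F' (u n)) (hgrad (u n)) z
    have hnn : (L/2) * ‖u (n+1) - u n‖ ^ 2 ≤ c * ‖u (n+1) - u n‖ ^ 2 :=
      mul_le_mul_of_nonneg_right hLc (sq_nonneg _)
    rw [hE, hE]
    linarith
  -- distance to minimizer estimate
  have hstar : ∀ n : ℕ, E (u (n+1)) - E ustar ≤
      c * (‖ustar - u n‖ ^ 2 - ‖ustar - u (n+1)‖ ^ 2) := by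
    intro n; have := step n ustar; linarith
  -- monotonicity
  have hmono : ∀ n : ℕ, E (u (n+1)) ≤ E (u n) := by
    intro n
    have := step n (u n)
    have h0 : ‖u n - u n‖ ^ 2 = 0 := by simp
    nlinarith [sq_nonneg ‖u n - u (n+1)‖]
  have hanti : ∀ m n : ℕ, m ≤ n → E (u n) ≤ E (u m) :=
    fun m n h => antitone_nat_of_succ_le (f := fun k => E (u k)) hmono h
  intro n hn
  have hnpos : (0:ℝ) < (n:ℝ) := by exact_mod_cast hn
  -- telescoping sum
  have hsum : ∑ k ∈ Finset.range n, (E (u (k+1)) - E ustar) ≤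
      c * (‖ustar - u 0‖ ^ 2 - ‖ustar - u n‖ ^ 2) := by
    calc ∑ k ∈ Finset.range n, (E (u (k+1)) - E ustar)
        ≤ ∑ k ∈ Finset.range n,
            c * (‖ustar - u k‖ ^ 2 - ‖ustar - u (k+1)‖ ^ 2) :=
          Finset.sum_le_sum fun k _ => hstar k
      _ = c * ∑ k ∈ Finset.range n, (‖ustar - u k‖ ^ 2 - ‖ustar - u (k+1)‖ ^ 2) := by
          rw [Finset.mul_sum]
      _ = c * (‖ustar - u 0‖ ^ 2 - ‖ustar - u n‖ ^ 2) := by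
          rw [Finset.sum_range_sub' (fun k => ‖ustar - u k‖ ^ 2)]
  have hlow : (n:ℝ) * (E (u n) - E ustar) ≤
      ∑ k ∈ Finset.range n, (E (u (k+1)) - E ustar) := by
    have := Finset.card_nsmul_le_sum (Finset.range n)
      (fun k => E (u (k+1)) - E ustar) (E (u n) - E ustar)
      (fun k hk => by
        have hk' : k + 1 ≤ n := Finset.mem_range.mp hk
        have := hanti (k+1) n hk'
        show E (u n) - E ustar ≤ E (u (k+1)) - E ustar
        linarith)
    simpa [nsmul_eq_mul] using this
  have hkey : (n:ℝ) * (E (u n) - E ustar) ≤ c * ‖ustar - u 0‖ ^ 2 := by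
    have h1 : c * (‖ustar - u 0‖ ^ 2 - ‖ustar - u n‖ ^ 2) ≤ c * ‖ustar - u 0‖ ^ 2 := by
      nlinarith [sq_nonneg ‖ustar - u n‖, hc.le]
    linarith
  have hflip : ‖ustar - u 0‖ = ‖u 0 - ustar‖ := norm_sub_rev _ _
  rw [hflip] at hkey
  have h2τn : (0:ℝ) < 2 * τ * (n:ℝ) := by positivity
  rw [le_div_iff₀ h2τn]
  have hmul := mul_le_mul_of_nonneg_left hkey (by linarith : (0:ℝ) ≤ 2 * τ)
  have hid : 2 * τ * (c * ‖u 0 - ustar‖ ^ 2) = ‖u 0 - ustar‖ ^ 2 := by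
    rw [hcdef]; field_simp
  rw [hid] at hmul
  nlinarith [hmul]
end

section
/- Let V be a finite-dimensional real inner product space, F : V → ℝ differentiable with L-Lipschitz continuous gradient and μ-strongly convex (0 < μ ≤ L), G : V → ℝ convex and continuous, and let u* be the minimizer of E = F + G. Fix τ ∈ (0, 1/L] and u ∈ V, and let u⁺ be the minimizer over V of w ↦ F(u) + ⟨∇F(u), w − u⟩ + (1/(2τ))‖w − u‖² + G(w). Then ‖u⁺ − u*‖² ≤ (1 − τμ)‖u − u*‖²; consequently the forward-backward splitting iterates converge linearly when E is strongly convex. -/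
open RealInnerProductSpace

private lemma fb_combo_norm_sq {V : Type*} [NormedAddCommGroup V] [InnerProductSpace ℝ V]
    (a b : V) (t : ℝ) :
    ‖a + t • (b - a)‖ ^ 2 = (1 - t) * ‖a‖ ^ 2 + t * ‖b‖ ^ 2 - t * (1 - t) * ‖b - a‖ ^ 2 := by
  simp only [← real_inner_self_eq_norm_sq, inner_add_add_self, inner_sub_sub_self,
    inner_smul_left, inner_smul_right, inner_sub_left, inner_sub_right, starRingEnd_apply,
    star_trivial]
  ring_nf

/-- One-step linear contraction of forward-backward splitting under strong convexity:
if `F` is `μ`-strongly convex with `L`-Lipschitz gradient (`0 < μ ≤ L`), `G` is convex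
continuous, `u*` minimizes `E = F + G`, `τ ∈ (0, 1/L]`, and `u⁺` minimizes the
forward-backward surrogate at `u`, then `‖u⁺ − u*‖² ≤ (1 − τμ)‖u − u*‖²`. -/
theorem forward_backward_linear_contraction
    {V : Type*} [NormedAddCommGroup V] [InnerProductSpace ℝ V] [FiniteDimensional ℝ V]
    (F : V → ℝ) (F' : V → V) (L μ : ℝ) (hμ0 : 0 < μ) (hμL : μ ≤ L)
    (hgrad : ∀ x : V, HasGradientAt F (F' x) x)
    (hstrong : ∀ u v : V, F v + ⟪F' v, u - v⟫ + (μ / 2) * ‖u - v‖ ^ 2 ≤ F u)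
    (hsmooth : ∀ u v : V, F u ≤ F v + ⟪F' v, u - v⟫ + (L / 2) * ‖u - v‖ ^ 2)
    (G : V → ℝ) (hGconv : ConvexOn ℝ Set.univ G) (hGcont : Continuous G)
    (E : V → ℝ) (hE : ∀ x, E x = F x + G x)
    (ustar : V) (hustar : ∀ x, E ustar ≤ E x)
    (τ : ℝ) (hτ0 : 0 < τ) (hτL : τ ≤ 1 / L)
    (u uplus : V)
    (hupd : ∀ z : V,
      F u + ⟪F' u, uplus - u⟫ + (1 / (2 * τ)) * ‖uplus - u‖ ^ 2 + G uplus ≤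
        F u + ⟪F' u, z - u⟫ + (1 / (2 * τ)) * ‖z - u‖ ^ 2 + G z) :
    ‖uplus - ustar‖ ^ 2 ≤ (1 - τ * μ) * ‖u - ustar‖ ^ 2 := by
  have hL0 : 0 < L := lt_of_lt_of_le hμ0 hμL
  have hLτ : τ * L ≤ 1 := (le_div_iff₀ hL0).mp hτL
  set c : ℝ := 1 / (2 * τ) with hc
  have hc0 : 0 < c := by positivity
  have key : ∀ t : ℝ, 0 < t → t < 1 →
      (1 - t) * ‖uplus - ustar‖ ^ 2 ≤ (1 - τ * μ) * ‖u - ustar‖ ^ 2 := by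
    intro t ht0 ht1
    set w : V := uplus + t • (ustar - uplus) with hw
    have hwu : w - u = (uplus - u) + t • ((ustar - u) - (uplus - u)) := by
      rw [hw]; module
    have h2 : ⟪F' u, w - u⟫ = (1 - t) * ⟪F' u, uplus - u⟫ + t * ⟪F' u, ustar - u⟫ := by
      rw [hwu]
      simp only [inner_add_right, inner_smul_right, inner_sub_right]
      ring
    have h3 : ‖w - u‖ ^ 2 = (1 - t) * ‖uplus - u‖ ^ 2 + t * ‖ustar - u‖ ^ 2
        - t * (1 - t) * ‖ustar - uplus‖ ^ 2 := by
      rw [hwu, fb_combo_norm_sq]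
      congr 3
      abel
    have hwc : w = (1 - t) • uplus + t • ustar := by
      rw [hw]; module
    have h4 : G w ≤ (1 - t) * G uplus + t * G ustar := by
      rw [hwc]
      exact hGconv.2 (Set.mem_univ _) (Set.mem_univ _) (by linarith) (le_of_lt ht0) (by ring)
    have h1 := hupd w
    rw [h2, h3] at h1
    have hmin : ⟪F' u, uplus - u⟫ + c * ‖uplus - u‖ ^ 2 + G uplus
        + c * (1 - t) * ‖ustar - uplus‖ ^ 2
        ≤ ⟪F' u, ustar - u⟫ + c * ‖ustar - u‖ ^ 2 + G ustar := by
      have step : t * (⟪F' u, uplus - u⟫ + c * ‖uplus - u‖ ^ 2 + G uplus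
          + c * (1 - t) * ‖ustar - uplus‖ ^ 2)
          ≤ t * (⟪F' u, ustar - u⟫ + c * ‖ustar - u‖ ^ 2 + G ustar) := by
        nlinarith [h1, h4]
      exact (mul_le_mul_iff_right₀ ht0).mp step
    have h5 := hsmooth uplus u
    have h6 := hstrong ustar u
    have h7 : F ustar + G ustar ≤ F uplus + G uplus := by
      have := hustar uplus; rw [hE, hE] at this; exact this
    have hLc : L / 2 ≤ c := by
      rw [hc, div_le_div_iff₀ (by norm_num) (by positivity)]
      nlinarith
    have hn1 : (0:ℝ) ≤ ‖uplus - u‖ ^ 2 := by positivity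
    have hn2 : ‖ustar - uplus‖ = ‖uplus - ustar‖ := norm_sub_rev _ _
    have hn3 : ‖ustar - u‖ = ‖u - ustar‖ := norm_sub_rev _ _
    rw [hn2, hn3] at hmin
    rw [hn3] at h6
    have hfinal : c * (1 - t) * ‖uplus - ustar‖ ^ 2 ≤ (c - μ / 2) * ‖u - ustar‖ ^ 2 := by
      have hprod : 0 ≤ (c - L / 2) * ‖uplus - u‖ ^ 2 :=
        mul_nonneg (sub_nonneg.2 hLc) hn1
      linarith [hmin, h5, h6, h7, hprod]
    have h2τc : 2 * τ * c = 1 := by rw [hc]; field_simp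
    have hmul := mul_le_mul_of_nonneg_left hfinal (show (0:ℝ) ≤ 2 * τ by positivity)
    calc (1 - t) * ‖uplus - ustar‖ ^ 2
        = (2 * τ * c) * ((1 - t) * ‖uplus - ustar‖ ^ 2) := by rw [h2τc, one_mul]
      _ = 2 * τ * (c * (1 - t) * ‖uplus - ustar‖ ^ 2) := by ring
      _ ≤ 2 * τ * ((c - μ / 2) * ‖u - ustar‖ ^ 2) := hmul
      _ = (2 * τ * c) * ‖u - ustar‖ ^ 2 - τ * μ * ‖u - ustar‖ ^ 2 := by ring
      _ = (1 - τ * μ) * ‖u - ustar‖ ^ 2 := by rw [h2τc]; ring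
  by_contra hcon
  push_neg at hcon
  set A := ‖uplus - ustar‖ ^ 2 with hA
  set B := (1 - τ * μ) * ‖u - ustar‖ ^ 2 with hB
  have hB0 : 0 ≤ B := by
    rw [hB]
    have hτμ : τ * μ ≤ 1 := le_trans (by nlinarith) hLτ
    have : (0:ℝ) ≤ ‖u - ustar‖ ^ 2 := by positivity
    nlinarith
  have hA0 : 0 < A := lt_of_le_of_lt hB0 hcon
  set t : ℝ := (A - B) / (2 * A) with ht
  have ht0 : 0 < t := by
    rw [ht]
    exact div_pos (by linarith) (by positivity)
  have ht1 : t < 1 := by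
    rw [ht, div_lt_one (by positivity)]
    linarith
  have hk := key t ht0 ht1
  have htA : t * A = (A - B) / 2 := by
    rw [ht]; field_simp
  linarith [hk, htA]
end
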